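/- Let S be a standard Borel space. Then the total variation map μ ↦ |μ|, from the space M±(S) of finite signed measures on S to the space M(S) of finite (nonnegative) measures on S, is measurable, where both spaces carry the σ-algebra generated by the evaluation maps μ ↦ μ(B) over measurable sets B ⊆ S. -/

import Mathlib

open MeasureTheory

/-- The σ-algebra on the space `M±(S)` of finite signed measures on `S`,
generated by the evaluation maps `μ ↦ μ B` over measurable sets `B`. -/
instance signedMeasureMeasurableSpace (S : Type*) [MeasurableSpace S] :
    MeasurableSpace (SignedMeasure S) :=
  ⨆ (B : Set S) (_ : MeasurableSet B),
    MeasurableSpace.comap (fun μ : SignedMeasure S => μ B) inferInstance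

instance totalVariation_isFiniteMeasure (S : Type*) [MeasurableSpace S]
    (μ : SignedMeasure S) : IsFiniteMeasure μ.totalVariation := by
  rw [SignedMeasure.totalVariation]; infer_instance

section TVAux

open Set
open scoped ENNReal symmDiff

namespace TVAux

variable {S : Type*} [m : MeasurableSpace S]

lemma apply_le_posPart (μ : SignedMeasure S) {u : Set S} (hu : MeasurableSet u) :
    μ u ≤ (μ.toJordanDecomposition.posPart u).toReal := by
  obtain ⟨i, hi₁, hi₂, hi₃, hp, hn⟩ := μ.toJordanDecomposition_spec
  have hsplit : μ u = μ (i ∩ u) + μ (iᶜ ∩ u) := by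
    rw [← VectorMeasure.of_union
        (Disjoint.mono inter_subset_left inter_subset_left disjoint_compl_right)
        (hi₁.inter hu) (hi₁.compl.inter hu)]
    congr 1
    rw [← Set.union_inter_distrib_right, Set.union_compl_self, Set.univ_inter]
  have hneg : μ (iᶜ ∩ u) ≤ 0 :=
    VectorMeasure.nonpos_of_restrict_le_zero μ
      (VectorMeasure.restrict_le_zero_subset μ hi₁.compl Set.inter_subset_left hi₃)
  have hval : (μ.toJordanDecomposition.posPart u).toReal = μ (i ∩ u) := by
    rw [hp, SignedMeasure.toMeasureOfZeroLE_apply μ hi₂ hi₁ hu]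
    simp
  rw [hval]; linarith

lemma neg_apply_le_negPart (μ : SignedMeasure S) {u : Set S} (hu : MeasurableSet u) :
    -μ u ≤ (μ.toJordanDecomposition.negPart u).toReal := by
  have := apply_le_posPart (-μ) hu
  rwa [SignedMeasure.toJordanDecomposition_neg, JordanDecomposition.neg_posPart,
    VectorMeasure.neg_apply] at this

lemma apply_le_add_totalVariation (μ : SignedMeasure S) {s t : Set S}
    (hs : MeasurableSet s) (ht : MeasurableSet t) :
    μ s ≤ μ t + (μ.totalVariation (s ∆ t)).toReal := by
  have h1 : μ s = μ (s ∩ t) + μ (s \ t) := by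
    rw [← VectorMeasure.of_union disjoint_sdiff_inter.symm
        (hs.inter ht) (hs.diff ht)]
    congr 1
    rw [Set.inter_union_diff]
  have h2 : μ t = μ (t ∩ s) + μ (t \ s) := by
    rw [← VectorMeasure.of_union disjoint_sdiff_inter.symm
        (ht.inter hs) (ht.diff hs)]
    congr 1
    rw [Set.inter_union_diff]
  have h2' : μ (t ∩ s) = μ (s ∩ t) := by rw [Set.inter_comm]
  have h3 : μ (s \ t) ≤ (μ.totalVariation (s \ t)).toReal := by
    refine (apply_le_posPart μ (hs.diff ht)).trans ?_
    rw [SignedMeasure.totalVariation, Measure.add_apply]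
    refine ENNReal.toReal_mono ?_ le_self_add
    exact ENNReal.add_ne_top.2 ⟨measure_ne_top _ _, measure_ne_top _ _⟩
  have h4 : -μ (t \ s) ≤ (μ.totalVariation (t \ s)).toReal := by
    refine (neg_apply_le_negPart μ (ht.diff hs)).trans ?_
    rw [SignedMeasure.totalVariation, Measure.add_apply]
    refine ENNReal.toReal_mono ?_ le_add_self
    exact ENNReal.add_ne_top.2 ⟨measure_ne_top _ _, measure_ne_top _ _⟩
  have h5 : μ.totalVariation (s ∆ t) = μ.totalVariation (s \ t) + μ.totalVariation (t \ s) := by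
    rw [Set.symmDiff_def, measure_union disjoint_sdiff_sdiff (ht.diff hs)]
  have h6 : (μ.totalVariation (s ∆ t)).toReal
      = (μ.totalVariation (s \ t)).toReal + (μ.totalVariation (t \ s)).toReal := by
    rw [h5, ENNReal.toReal_add (measure_ne_top _ _) (measure_ne_top _ _)]
  rw [h6]; linarith

lemma posPart_eq_biSup {𝒜 : Set (Set S)} (h𝒜 : IsSetAlgebra 𝒜)
    (hgen : m = MeasurableSpace.generateFrom 𝒜)
    (μ : SignedMeasure S) {B : Set S} (hB : MeasurableSet B) :
    μ.toJordanDecomposition.posPart B = ⨆ A ∈ 𝒜, ENNReal.ofReal (μ (A ∩ B)) := by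
  have hmeas𝒜 : ∀ A ∈ 𝒜, MeasurableSet A := fun A hA =>
    hgen ▸ MeasurableSpace.measurableSet_generateFrom hA
  have key : ∀ {u : Set S}, MeasurableSet u →
      ENNReal.ofReal (μ u) ≤ μ.toJordanDecomposition.posPart u := by
    intro u hu
    calc ENNReal.ofReal (μ u) ≤ ENNReal.ofReal (μ.toJordanDecomposition.posPart u).toReal :=
          ENNReal.ofReal_le_ofReal (apply_le_posPart μ hu)
      _ = μ.toJordanDecomposition.posPart u := ENNReal.ofReal_toReal (measure_ne_top _ _)
  refine le_antisymm ?_ ?_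
  · have hdense : μ.totalVariation.MeasureDense 𝒜 :=
      Measure.MeasureDense.of_generateFrom_isSetAlgebra_finite _ h𝒜 hgen
    refine ENNReal.le_of_forall_pos_le_add fun ε hε _ => ?_
    obtain ⟨i, hi₁, hi₂, hi₃, hp, hn⟩ := μ.toJordanDecomposition_spec
    obtain ⟨A, hA𝒜, hAε⟩ := hdense.approx i hi₁ (measure_ne_top _ _) ε
      (by exact_mod_cast hε)
    have hval : μ.toJordanDecomposition.posPart B = ENNReal.ofReal (μ (i ∩ B)) := by
      rw [hp, SignedMeasure.toMeasureOfZeroLE_apply μ hi₂ hi₁ hB,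
        ENNReal.ofReal_eq_coe_nnreal]
    have hsub : (i ∩ B) ∆ (A ∩ B) ⊆ i ∆ A := by
      intro x hx
      simp only [Set.mem_symmDiff, Set.mem_inter_iff] at hx ⊢
      tauto
    have hbound : μ (i ∩ B) ≤ μ (A ∩ B) + (ε : ℝ) := by
      have := apply_le_add_totalVariation μ (hi₁.inter hB) ((hmeas𝒜 A hA𝒜).inter hB)
      have h7 : (μ.totalVariation ((i ∩ B) ∆ (A ∩ B))).toReal ≤ (ε : ℝ) := by
        refine ENNReal.toReal_le_of_le_ofReal ε.coe_nonneg ?_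
        refine le_trans (measure_mono hsub) ?_
        exact le_of_lt (by simpa using hAε)
      linarith
    calc μ.toJordanDecomposition.posPart B = ENNReal.ofReal (μ (i ∩ B)) := hval
      _ ≤ ENNReal.ofReal (μ (A ∩ B) + (ε : ℝ)) := ENNReal.ofReal_le_ofReal hbound
      _ ≤ ENNReal.ofReal (μ (A ∩ B)) + ENNReal.ofReal (ε : ℝ) := ENNReal.ofReal_add_le
      _ ≤ (⨆ A ∈ 𝒜, ENNReal.ofReal (μ (A ∩ B))) + ε := by
          gcongr
          · exact le_iSup₂ (f := fun A (_ : A ∈ 𝒜) => ENNReal.ofReal (μ (A ∩ B))) A hA𝒜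
          · simp
  · refine iSup₂_le fun A hA => ?_
    refine (key ((hmeas𝒜 A hA).inter hB)).trans ?_
    exact measure_mono Set.inter_subset_right

lemma totalVariation_eq_biSup {𝒜 : Set (Set S)} (h𝒜 : IsSetAlgebra 𝒜)
    (hgen : m = MeasurableSpace.generateFrom 𝒜)
    (μ : SignedMeasure S) {B : Set S} (hB : MeasurableSet B) :
    μ.totalVariation B = (⨆ A ∈ 𝒜, ENNReal.ofReal (μ (A ∩ B)))
      + ⨆ A ∈ 𝒜, ENNReal.ofReal (-μ (A ∩ B)) := by
  rw [SignedMeasure.totalVariation, Measure.add_apply,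
    posPart_eq_biSup h𝒜 hgen μ hB]
  congr 1
  have : μ.toJordanDecomposition.negPart = (-μ).toJordanDecomposition.posPart := by
    rw [SignedMeasure.toJordanDecomposition_neg, JordanDecomposition.neg_posPart]
  rw [this, posPart_eq_biSup h𝒜 hgen (-μ) hB]
  simp [VectorMeasure.neg_apply]

lemma measurable_eval {C : Set S} (hC : MeasurableSet C) :
    Measurable (fun μ : SignedMeasure S => μ C) :=
  measurable_iff_comap_le.2
    (le_iSup₂ (f := fun B (_ : MeasurableSet B) =>
      MeasurableSpace.comap (fun μ : SignedMeasure S => μ B) inferInstance) C hC)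

end TVAux

end TVAux

/-- for a standard Borel space `S`, the total variation map
`μ ↦ |μ|` from `M±(S)` to `M(S)` is measurable, where `M(S)` (the finite
nonnegative measures) carries the σ-algebra induced by the evaluation maps. -/
theorem totalVariation_measurable (S : Type*) [MeasurableSpace S] [StandardBorelSpace S] :
    Measurable (fun μ : SignedMeasure S =>
      (⟨μ.totalVariation, inferInstance⟩ : {ν : Measure S // IsFiniteMeasure ν})) := by
  obtain ⟨𝒞, h𝒞count, h𝒞gen⟩ :=
    MeasurableSpace.CountablyGenerated.isCountablyGenerated (α := S)
  set 𝒜 := MeasureTheory.generateSetAlgebra 𝒞 with h𝒜def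
  have h𝒜 : IsSetAlgebra 𝒜 := MeasureTheory.isSetAlgebra_generateSetAlgebra
  have h𝒜count : 𝒜.Countable := MeasureTheory.countable_generateSetAlgebra h𝒞count
  have hgen : ‹MeasurableSpace S› = MeasurableSpace.generateFrom 𝒜 := by
    rw [h𝒞gen, h𝒜def, MeasureTheory.generateFrom_generateSetAlgebra_eq]
  have hm : ∀ A ∈ 𝒜, MeasurableSet A := fun A hA =>
    hgen ▸ MeasurableSpace.measurableSet_generateFrom hA
  apply Measurable.subtype_mk
  apply Measure.measurable_of_measurable_coe
  intro B hB
  have heq : (fun μ : SignedMeasure S => μ.totalVariation B)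
      = fun μ : SignedMeasure S => (⨆ A ∈ 𝒜, ENNReal.ofReal (μ (A ∩ B)))
        + ⨆ A ∈ 𝒜, ENNReal.ofReal (-μ (A ∩ B)) :=
    funext fun μ => TVAux.totalVariation_eq_biSup h𝒜 hgen μ hB
  rw [heq]
  refine Measurable.add ?_ ?_
  · exact Measurable.biSup 𝒜 h𝒜count fun A hA =>
      ENNReal.measurable_ofReal.comp (TVAux.measurable_eval ((hm A hA).inter hB))
  · exact Measurable.biSup 𝒜 h𝒜count fun A hA =>
      ENNReal.measurable_ofReal.comp
        (measurable_neg.comp (TVAux.measurable_eval ((hm A hA).inter hB)))
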